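/- Fix a finite nonempty model set Q and strictly positive prior probabilities μ₀ : Q → ℝ with Σ_{q∈Q} μ₀(q) = 1, and per-step divergence values D_ℓ : Q → ℝ. Define the geometric-mean model probabilities μ̄_k(q) = μ₀(q) exp(−Σ_{ℓ=1}^k D_ℓ(q)) / Σ_{q'∈Q} μ₀(q') exp(−Σ_{ℓ=1}^k D_ℓ(q')). Suppose the true model ∗ ∈ Q satisfies D_ℓ(∗) = 0 for all ℓ and D_ℓ(q) ≥ 0 for all q ∈ Q and all ℓ (nonnegativity of KL divergence, with possibly D_ℓ(q) = 0 infinitely often). Then for every q ≠ ∗ the ratio μ̄_k(q)/μ̄_k(∗) is nonincreasing in k and satisfies μ̄_k(q)/μ̄_k(∗) ≤ μ₀(q)/μ₀(∗); consequently, the geometric-mean probability of the true model is nondecreasing in k and satisfies μ̄_k(∗) ≥ μ₀(∗) for all k, i.e., the posterior model mean probabilities are no worse than their priors. (Corollary: Monotone Consistency.) -/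

import Mathlib

open Finset

variable {Q : Type*} [Fintype Q]

/-- Geometric-mean model probabilities of the static multiple-model filter:
`μ̄_k(q) = μ₀(q) exp(−Σ_{ℓ=1}^k D_ℓ(q)) / Σ_{q'} μ₀(q') exp(−Σ_{ℓ=1}^k D_ℓ(q'))`. -/
noncomputable def geoMeanProb (μ₀ : Q → ℝ) (D : ℕ → Q → ℝ) (k : ℕ) (q : Q) : ℝ :=
  μ₀ q * Real.exp (-∑ ℓ ∈ Finset.Icc 1 k, D ℓ q) /
    ∑ q' : Q, μ₀ q' * Real.exp (-∑ ℓ ∈ Finset.Icc 1 k, D ℓ q')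

/-- **Corollary (Monotone Consistency).** If the true model `∗` has zero per-step divergence
and all divergences are nonnegative (possibly zero infinitely often), then for every `q ≠ ∗`
the ratio `μ̄_k(q)/μ̄_k(∗)` is nonincreasing in `k` and bounded by the prior ratio, and the
geometric-mean probability of the true model is nondecreasing and no worse than its prior. -/
theorem monotone_consistency_static [Nonempty Q]
    (μ₀ : Q → ℝ) (hμ₀ : ∀ q, 0 < μ₀ q) (hsum : ∑ q : Q, μ₀ q = 1)
    (D : ℕ → Q → ℝ) (qstar : Q)
    (hstar : ∀ ℓ, D ℓ qstar = 0)
    (hnonneg : ∀ q : Q, ∀ ℓ, 0 ≤ D ℓ q) :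
    (∀ q : Q, q ≠ qstar →
      (Antitone fun k => geoMeanProb μ₀ D k q / geoMeanProb μ₀ D k qstar) ∧
      ∀ k, geoMeanProb μ₀ D k q / geoMeanProb μ₀ D k qstar ≤ μ₀ q / μ₀ qstar) ∧
    (Monotone fun k => geoMeanProb μ₀ D k qstar) ∧
    ∀ k, μ₀ qstar ≤ geoMeanProb μ₀ D k qstar := by
  set S : ℕ → Q → ℝ := fun k q => ∑ ℓ ∈ Finset.Icc 1 k, D ℓ q with hS
  have hSnonneg : ∀ k q, 0 ≤ S k q := fun k q =>
    Finset.sum_nonneg fun ℓ _ => hnonneg q ℓ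
  have hSmono : ∀ q, Monotone fun k => S k q := by
    intro q k m hkm
    exact Finset.sum_le_sum_of_subset_of_nonneg
      (Finset.Icc_subset_Icc le_rfl hkm) (fun ℓ _ _ => hnonneg q ℓ)
  have hSstar : ∀ k, S k qstar = 0 := fun k =>
    Finset.sum_eq_zero fun ℓ _ => hstar ℓ
  set Z : ℕ → ℝ := fun k => ∑ q' : Q, μ₀ q' * Real.exp (-S k q') with hZ
  have hZpos : ∀ k, 0 < Z k := fun k =>
    Finset.sum_pos (fun q _ => mul_pos (hμ₀ q) (Real.exp_pos _)) Finset.univ_nonempty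
  have hZanti : Antitone Z := by
    intro k m hkm
    exact Finset.sum_le_sum fun q _ =>
      mul_le_mul_of_nonneg_left
        (Real.exp_le_exp.2 (neg_le_neg (hSmono q hkm))) (hμ₀ q).le
  have hZle1 : ∀ k, Z k ≤ 1 := by
    intro k
    calc Z k ≤ ∑ q : Q, μ₀ q := Finset.sum_le_sum fun q _ => by
          have : Real.exp (-S k q) ≤ 1 := by
            rw [Real.exp_le_one_iff]; linarith [hSnonneg k q]
          nlinarith [(hμ₀ q).le]
      _ = 1 := hsum
  have hstarval : ∀ k, geoMeanProb μ₀ D k qstar = μ₀ qstar / Z k := by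
    intro k
    have h0 : ∑ ℓ ∈ Finset.Icc 1 k, D ℓ qstar = 0 := hSstar k
    simp only [geoMeanProb, h0, neg_zero, Real.exp_zero, mul_one]
    rfl
  have hratio : ∀ q k, geoMeanProb μ₀ D k q / geoMeanProb μ₀ D k qstar
      = μ₀ q * Real.exp (-S k q) / μ₀ qstar := by
    intro q k
    have h1 : geoMeanProb μ₀ D k q = μ₀ q * Real.exp (-S k q) / Z k := rfl
    rw [h1, hstarval k]
    have hZk : Z k ≠ 0 := (hZpos k).ne'
    have hμs : μ₀ qstar ≠ 0 := (hμ₀ qstar).ne'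
    field_simp
  refine ⟨fun q _ => ⟨?_, ?_⟩, ?_, ?_⟩
  · intro k m hkm
    simp only [hratio]
    apply div_le_div_of_nonneg_right _ (hμ₀ qstar).le
    exact mul_le_mul_of_nonneg_left
      (Real.exp_le_exp.2 (neg_le_neg (hSmono q hkm))) (hμ₀ q).le
  · intro k
    rw [hratio]
    apply div_le_div_of_nonneg_right _ (hμ₀ qstar).le
    nlinarith [Real.exp_le_one_iff.2 (neg_nonpos.2 (hSnonneg k q)), (hμ₀ q).le,
      Real.exp_pos (-S k q)]
  · intro k m hkm
    simp only [hstarval]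
    exact div_le_div_of_nonneg_left (hμ₀ qstar).le (hZpos m) (hZanti hkm)
  · intro k
    rw [hstarval k]
    calc μ₀ qstar = μ₀ qstar / 1 := (div_one _).symm
      _ ≤ μ₀ qstar / Z k := div_le_div_of_nonneg_left (hμ₀ qstar).le (hZpos k) (hZle1 k)
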